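/- arXiv:1806.11180 — 6 statements merged into one kernel-verified Lean document; each statement's English description precedes it below -/
import Mathlib

section
/- Let r be a well-founded binary relation on a type X, and let X also carry a linear order ≤X whose strict order <X is well-founded. Then the Kleene–Brouwer order <KB on the r-descending lists over X is a strict linear order and is well-founded. -/
/-- A list `[a₀, a₁, …, aₙ]` is `r`-descending if each entry is `r`-below the
previous one, i.e. `r aᵢ₊₁ aᵢ` for each `i < n`. -/
def IsDescending {X : Type*} (r : X → X → Prop) (l : List X) : Prop :=
  List.Chain' (fun a b => r b a) l

/-- The Kleene–Brouwer order on lists over a linear order `X`: `s <KB t` iff `t`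
is a proper initial segment (prefix) of `s`, or at the first place `i` where they
differ (with `i` less than both lengths) the entry of `s` is below that of `t`. -/
def KBLt {X : Type*} [LinearOrder X] (s t : List X) : Prop :=
  (t <+: s ∧ t ≠ s) ∨
    ∃ (i : ℕ) (hs : i < s.length) (ht : i < t.length),
      (∀ j : ℕ, j < i → s[j]? = t[j]?) ∧ s.get ⟨i, hs⟩ < t.get ⟨i, ht⟩

set_option linter.unusedSectionVars false

namespace KBAux

variable {X : Type*} [LinearOrder X]

theorem KBLt_def (s t : List X) : KBLt s t ↔
    (t <+: s ∧ t ≠ s) ∨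
    ∃ (i : ℕ) (hs : i < s.length) (ht : i < t.length),
      (∀ j : ℕ, j < i → s[j]? = t[j]?) ∧ s.get ⟨i, hs⟩ < t.get ⟨i, ht⟩ := Iff.rfl

theorem eq_of_getElem? {s t : List X} {j : ℕ} (h : s[j]? = t[j]?)
    (h1 : j < s.length) (h2 : j < t.length) : s[j] = t[j] := by
  rw [List.getElem?_eq_getElem h1, List.getElem?_eq_getElem h2] at h
  exact Option.some.inj h

theorem prefix_getElem? {u s : List X} (h : u <+: s) {j : ℕ} (hj : j < u.length) :
    s[j]? = u[j]? := by
  rw [List.getElem?_eq_getElem hj, List.getElem?_eq_getElem (hj.trans_le h.length_le),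
    h.getElem hj]

theorem prefix_of_getElem? {u s : List X} (h : ∀ j < u.length, u[j]? = s[j]?) :
    u <+: s := by
  rw [List.prefix_iff_eq_take]
  apply List.ext_getElem?
  intro n
  rw [List.getElem?_take]
  split
  · exact h n ‹_›
  · exact List.getElem?_eq_none (le_of_not_gt ‹_›)

theorem kb_irrefl (s : List X) : ¬ KBLt s s := by
  rintro (⟨-, hne⟩ | ⟨i, hs, ht, -, hlt⟩)
  · exact hne rfl
  · exact lt_irrefl _ hlt

theorem kb_nil_not_lt (t : List X) : ¬ KBLt ([] : List X) t := by
  rintro (⟨hp, hne⟩ | ⟨i, hs, -, -, -⟩)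
  · exact hne (List.prefix_nil.mp hp)
  · simp at hs

theorem kb_cons_of (a : X) {s t : List X} (h : KBLt s t) : KBLt (a :: s) (a :: t) := by
  rcases h with ⟨h1, h2⟩ | ⟨i, hs, ht, hag, hlt⟩
  · exact Or.inl ⟨List.cons_prefix_cons.mpr ⟨rfl, h1⟩, by simpa using h2⟩
  · refine Or.inr ⟨i + 1, by simpa using hs, by simpa using ht, ?_, ?_⟩
    · intro j hj
      cases j with
      | zero => simp
      | succ k => simpa using hag k (by omega)
    · simpa [List.get_eq_getElem] using hlt

theorem kb_cons_elim {c b : X} {s' x : List X} (h : KBLt (c :: s') (b :: x)) :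
    c < b ∨ (c = b ∧ KBLt s' x) := by
  rcases h with ⟨h1, h2⟩ | ⟨i, hs, ht, hag, hlt⟩
  · obtain ⟨hbc, hpre⟩ := List.cons_prefix_cons.mp h1
    exact Or.inr ⟨hbc.symm, Or.inl ⟨hpre, fun hx => h2 (by rw [hbc, hx])⟩⟩
  · cases i with
    | zero =>
      left; simpa [List.get_eq_getElem] using hlt
    | succ k =>
      have h0 := hag 0 (by omega)
      simp at h0
      refine Or.inr ⟨h0, Or.inr ⟨k, by simpa using hs, by simpa using ht, ?_, ?_⟩⟩
      · intro j hj
        simpa using hag (j + 1) (by omega)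
      · simpa [List.get_eq_getElem] using hlt

theorem kb_trichot (s : List X) : ∀ t : List X, KBLt s t ∨ s = t ∨ KBLt t s := by
  induction s with
  | nil =>
    intro t
    cases t with
    | nil => exact Or.inr (Or.inl rfl)
    | cons b t' => exact Or.inr (Or.inr (Or.inl ⟨List.nil_prefix, by simp⟩))
  | cons a s' ih =>
    intro t
    cases t with
    | nil => exact Or.inl (Or.inl ⟨List.nil_prefix, by simp⟩)
    | cons b t' =>
      rcases lt_trichotomy a b with h | rfl | h
      · exact Or.inl (Or.inr ⟨0, by simp, by simp, by simp, by
          simpa [List.get_eq_getElem] using h⟩)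
      · rcases ih t' with h | rfl | h
        · exact Or.inl (kb_cons_of a h)
        · exact Or.inr (Or.inl rfl)
        · exact Or.inr (Or.inr (kb_cons_of a h))
      · exact Or.inr (Or.inr (Or.inr ⟨0, by simp, by simp, by simp, by
          simpa [List.get_eq_getElem] using h⟩))

theorem kb_trans {s t u : List X} (h1 : KBLt s t) (h2 : KBLt t u) : KBLt s u := by
  rcases h1 with ⟨hp1, hne1⟩ | ⟨i, his, hit, hag1, hlt1⟩
  · rcases h2 with ⟨hp2, hne2⟩ | ⟨k, hkt, hku, hag2, hlt2⟩
    · refine Or.inl ⟨hp2.trans hp1, fun he => hne2 ?_⟩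
      subst he
      exact hp2.eq_of_length (le_antisymm hp2.length_le hp1.length_le)
    · right
      have hks : k < s.length := hkt.trans_le hp1.length_le
      refine ⟨k, hks, hku, ?_, ?_⟩
      · intro j hj
        rw [prefix_getElem? hp1 (hj.trans hkt)]
        exact hag2 j hj
      · have he : s[k] = t[k] := (hp1.getElem hkt).symm
        simp only [List.get_eq_getElem] at hlt2 ⊢
        rw [he]; exact hlt2
  · rcases h2 with ⟨hp2, hne2⟩ | ⟨k, hkt, hku, hag2, hlt2⟩
    · by_cases hiu : i < u.length
      · right
        refine ⟨i, his, hiu, ?_, ?_⟩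
        · intro j hj
          rw [hag1 j hj, prefix_getElem? hp2 (hj.trans hiu)]
        · simp only [List.get_eq_getElem] at hlt1 ⊢
          rw [hp2.getElem hiu]; exact hlt1
      · push_neg at hiu
        left
        constructor
        · apply prefix_of_getElem?
          intro j hj
          have e1 : s[j]? = t[j]? := hag1 j (lt_of_lt_of_le hj hiu)
          have e2 : t[j]? = u[j]? := prefix_getElem? hp2 hj
          exact (e1.trans e2).symm
        · intro he
          subst he
          exact absurd his (not_lt.mpr hiu)
    · rcases lt_trichotomy i k with hik | rfl | hki
      · right
        refine ⟨i, his, hik.trans hku, fun j hj => (hag1 j hj).trans (hag2 j (hj.trans hik)), ?_⟩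
        have he : t[i] = u[i] := eq_of_getElem? (hag2 i hik) hit (hik.trans hku)
        simp only [List.get_eq_getElem] at hlt1 ⊢
        rw [← he]; exact hlt1
      · right
        refine ⟨i, his, hku, fun j hj => (hag1 j hj).trans (hag2 j hj), ?_⟩
        simp only [List.get_eq_getElem] at hlt1 hlt2 ⊢
        exact hlt1.trans hlt2
      · right
        refine ⟨k, hki.trans his, hku, fun j hj => (hag1 j (hj.trans hki)).trans (hag2 j hj), ?_⟩
        have he : s[k] = t[k] := eq_of_getElem? (hag1 k hki) (hki.trans his) hkt
        simp only [List.get_eq_getElem] at hlt2 ⊢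
        rw [he]; exact hlt2

/-- Descending lists whose head (if any) satisfies `P`. -/
def HC (r : X → X → Prop) (P : X → Prop) (l : List X) : Prop :=
  IsDescending r l ∧ ∀ b ∈ l.head?, P b

/-- KB order restricted to lists satisfying `HC r P`. -/
def RR (r : X → X → Prop) (P : X → Prop) (s t : List X) : Prop :=
  HC r P s ∧ HC r P t ∧ KBLt s t

theorem hc_tail {r : X → X → Prop} {b : X} {l' : List X}
    (h : IsDescending r (b :: l')) : HC r (fun c => r c b) l' := by
  rw [IsDescending] at h
  replace h := List.isChain_cons.mp h
  exact ⟨h.2, h.1⟩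

theorem wf_RR_of (r : X → X → Prop) (hX : WellFounded ((· < ·) : X → X → Prop))
    (P : X → Prop) (H : ∀ b, P b → WellFounded (RR r (fun c => r c b))) :
    WellFounded (RR r P) := by
  have M : ∀ b, P b → ∀ l', HC r (fun c => r c b) l' → Acc (RR r P) (b :: l') := by
    intro b
    refine hX.induction
      (C := fun b => P b → ∀ l', HC r (fun c => r c b) l' → Acc (RR r P) (b :: l')) b ?_
    intro b IHb Pb l'
    refine (H b Pb).induction
      (C := fun l' => HC r (fun c => r c b) l' → Acc (RR r P) (b :: l')) l' ?_
    intro l' IHl hl'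
    constructor
    intro s hs
    obtain ⟨hcs, -, hlt⟩ := hs
    cases s with
    | nil => exact absurd hlt (kb_nil_not_lt _)
    | cons c s' =>
      rcases kb_cons_elim hlt with hcb | ⟨rfl, hlt'⟩
      · exact IHb c hcb (hcs.2 c (by simp)) s' (hc_tail hcs.1)
      · exact IHl s' ⟨hc_tail hcs.1, hl', hlt'⟩ (hc_tail hcs.1)
  constructor
  intro l
  by_cases h : HC r P l
  · cases l with
    | nil =>
      constructor
      intro s hs
      obtain ⟨hcs, -, hlt⟩ := hs
      cases s with
      | nil => exact absurd hlt (kb_irrefl _)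
      | cons c s' => exact M c (hcs.2 c (by simp)) s' (hc_tail hcs.1)
    | cons b l' => exact M b (h.2 b (by simp)) l' (hc_tail h.1)
  · constructor
    intro s hs
    exact absurd hs.2.1 h

theorem wf_RR_r (r : X → X → Prop) (hX : WellFounded ((· < ·) : X → X → Prop))
    (hr : WellFounded r) (a : X) : WellFounded (RR r (fun c => r c a)) := by
  refine hr.induction (C := fun a => WellFounded (RR r (fun c => r c a))) a ?_
  intro a IH
  exact wf_RR_of r hX _ (fun b hb => IH b hb)

end KBAux

/-- If `r` is a well-founded relation on `X` and `X` carries a linear order whose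
strict order is well-founded, then the Kleene–Brouwer order on the `r`-descending
lists over `X` is a strict linear order and is well-founded. -/
theorem kleeneBrouwer_isStrictTotalOrder_and_wellFounded {X : Type*} [LinearOrder X]
    (hX : WellFounded ((· < ·) : X → X → Prop))
    (r : X → X → Prop) (hr : WellFounded r) :
    IsStrictTotalOrder {l : List X // IsDescending r l}
      (fun s t => KBLt s.1 t.1) ∧
    WellFounded (fun s t : {l : List X // IsDescending r l} => KBLt s.1 t.1) := by
  constructor
  · exact
      { trichotomous := fun s t h1 h2 => by
          rcases KBAux.kb_trichot s.1 t.1 with h | h | h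
          · exact absurd h h1
          · exact Subtype.ext h
          · exact absurd h h2
        irrefl := fun s => KBAux.kb_irrefl s.1
        trans := fun s t u h1 h2 => KBAux.kb_trans h1 h2 }
  · have wftop := KBAux.wf_RR_of r hX (fun _ => True)
      (fun b _ => KBAux.wf_RR_r r hX hr b)
    refine Subrelation.wf (r := InvImage (KBAux.RR r (fun _ => True)) Subtype.val)
      ?_ (InvImage.wf _ wftop)
    intro s t h
    exact ⟨⟨s.2, fun _ _ => trivial⟩, ⟨t.2, fun _ _ => trivial⟩, h⟩
end

section
/- Let r be a well-founded binary relation on a type X, and let X also carry a linear order ≤X whose strict order <X is well-founded. For each a ∈ X, the collection of r-descending lists whose last entry is a is nonempty and has a <KB-least element π(a) in the Kleene–Brouwer order. The resulting map π is a ranking of r: if r b a then π(b) <KB π(a). -/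
open Relation

section Aux

variable {X : Type*} [LinearOrder X]

theorem kbLt_head {s t : List X} {x y : X} (h : x < y) : KBLt (x :: s) (y :: t) :=
  Or.inr ⟨0, by simp, by simp, fun j hj => absurd hj (Nat.not_lt_zero j), by simpa⟩

theorem kbLt_cons {s t : List X} (c : X) (h : KBLt s t) : KBLt (c :: s) (c :: t) := by
  rcases h with ⟨hpre, hne⟩ | ⟨i, hs, ht, hagree, hlt⟩
  · exact Or.inl ⟨List.cons_prefix_cons.mpr ⟨rfl, hpre⟩, by simpa using hne⟩
  · refine Or.inr ⟨i + 1, by simpa using Nat.succ_lt_succ hs, by simpa using Nat.succ_lt_succ ht,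
      fun j hj => ?_, by simpa using hlt⟩
    cases j with
    | zero => simp
    | succ j => simpa using hagree j (Nat.lt_of_succ_lt_succ hj)

theorem kbLt_concat (l : List X) (b : X) : KBLt (l ++ [b]) l :=
  Or.inl ⟨List.prefix_append l [b], by simp⟩

/-- From `KBLt s (t ++ [x])` and `s ≠ t`, deduce `KBLt s t`. -/
theorem kbLt_of_kbLt_concat {s t : List X} {x : X} (h : KBLt s (t ++ [x])) (hne : s ≠ t) :
    KBLt s t := by
  rcases h with ⟨hpre, _⟩ | ⟨i, hs, ht, hagree, hlt⟩
  · exact Or.inl ⟨(List.prefix_append t [x]).trans hpre, fun e => hne e.symm⟩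
  · rcases lt_or_ge i t.length with hi | hi
    · refine Or.inr ⟨i, hs, hi, fun j hj => ?_, ?_⟩
      · rw [hagree j hj, List.getElem?_append_left (hj.trans hi)]
      · have : (t ++ [x]).get ⟨i, ht⟩ = t.get ⟨i, hi⟩ := by
          simp [List.get_eq_getElem, List.getElem_append_left hi]
        rw [this] at hlt; exact hlt
    · -- i = t.length, so t is a proper prefix of s
      have ht' : i < t.length + 1 := by simpa using ht
      have hil : i = t.length := le_antisymm (Nat.lt_succ_iff.mp ht') hi
      left
      constructor
      · rw [List.prefix_iff_eq_take]
        refine List.ext_getElem? fun n => ?_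
        rcases lt_or_ge n t.length with hn | hn
        · rw [List.getElem?_take, if_pos hn, hagree n (hil ▸ hn),
            List.getElem?_append_left hn]
        · rw [List.getElem?_eq_none hn, List.getElem?_take, if_neg (Nat.not_lt.mpr hn)]
      · exact fun e => hne e.symm

variable (r : X → X → Prop)

theorem reach_head {a : X} : ∀ (t : List X) (h : X), IsDescending r (h :: t) →
    (h :: t).getLast? = some a → ReflTransGen r a h := by
  intro t
  induction t with
  | nil =>
    intro h _ hl
    have : h = a := by simpa using hl
    subst this
    exact ReflTransGen.refl
  | cons y t ih =>
    intro h hd hl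
    have hd' := List.isChain_cons_cons.mp hd
    have : ReflTransGen r a y := ih y hd'.2 (by simpa using hl)
    exact this.tail hd'.1

open Classical in
noncomputable def gAux (hX : WellFounded ((· < ·) : X → X → Prop))
    (hr : WellFounded r) (a : X) : X → List X :=
  hr.fix fun c ih =>
    if h : ∃ x, x ∈ {x | r x c ∧ ReflTransGen r a x} then
      hX.min _ h :: ih (hX.min _ h) (hX.min_mem _ h).1
    else []

open Classical in
theorem gAux_eq (hX : WellFounded ((· < ·) : X → X → Prop)) (hr : WellFounded r) (a c : X) :
    gAux r hX hr a c =
      if h : ∃ x, x ∈ {x | r x c ∧ ReflTransGen r a x} then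
        hX.min _ h :: gAux r hX hr a (hX.min _ h)
      else [] := by
  rw [gAux, WellFounded.fix_eq]

theorem gAux_at_a (hX : WellFounded ((· < ·) : X → X → Prop)) (hr : WellFounded r) (a : X) :
    gAux r hX hr a a = [] := by
  rw [gAux_eq]
  rw [dif_neg]
  rintro ⟨x, hx, hax⟩
  exact (hr.transGen).asymmetric _ _ (Relation.TransGen.tail' hax hx) (Relation.TransGen.tail' hax hx)

theorem gAux_spec (hX : WellFounded ((· < ·) : X → X → Prop)) (hr : WellFounded r) (a : X) :
    ∀ c : X, ReflTransGen r a c →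
      IsDescending r (c :: gAux r hX hr a c) ∧ (c :: gAux r hX hr a c).getLast? = some a := by
  intro c
  induction c using hr.induction with
  | _ c ih =>
    intro hc
    rw [gAux_eq]
    by_cases h : ∃ x, x ∈ {x | r x c ∧ ReflTransGen r a x}
    · rw [dif_pos h]
      obtain ⟨hx, hax⟩ := hX.min_mem _ h
      have := ih _ hx hax
      exact ⟨List.isChain_cons_cons.mpr ⟨hx, this.1⟩, by rw [List.getLast?_cons_cons]; exact this.2⟩
    · rw [dif_neg h]
      have : c = a := by
        rcases hc.cases_tail with h' | ⟨y, hy, hyc⟩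
        · exact h'
        · exact absurd ⟨y, hyc, hy⟩ h
      subst this
      exact ⟨List.isChain_singleton _, rfl⟩

theorem gAux_least (hX : WellFounded ((· < ·) : X → X → Prop)) (hr : WellFounded r) (a : X) :
    ∀ c : X, ∀ h : X, ∀ t : List X, r h c → IsDescending r (h :: t) →
      (h :: t).getLast? = some a →
      gAux r hX hr a c = h :: t ∨ KBLt (gAux r hX hr a c) (h :: t) := by
  intro c
  induction c using hr.induction with
  | _ c ih =>
    intro h t hhc hd hl
    have hreach : ReflTransGen r a h := reach_head r t h hd hl
    have hne : ∃ x, x ∈ {x | r x c ∧ ReflTransGen r a x} := ⟨h, hhc, hreach⟩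
    rw [gAux_eq, dif_pos hne]
    have hmle : hX.min {x | r x c ∧ ReflTransGen r a x} hne ≤ h :=
      not_lt.mp (hX.not_lt_min {x | r x c ∧ ReflTransGen r a x} (x := h) ⟨hhc, hreach⟩)
    rcases lt_or_eq_of_le hmle with hlt | heq
    · exact Or.inr (kbLt_head hlt)
    · rw [heq]
      cases t with
      | nil =>
        have ha : h = a := by simpa using hl
        rw [ha, gAux_at_a]
        exact Or.inl rfl
      | cons h' t' =>
        have hd' := List.isChain_cons_cons.mp hd
        have := ih h (heq ▸ (hX.min_mem _ hne).1) h' t' hd'.1 hd'.2 (by simpa using hl)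
        rcases this with he | hk
        · exact Or.inl (by rw [he])
        · exact Or.inr (kbLt_cons h hk)

end Aux

/-- For each `a ∈ X`, the collection of `r`-descending lists ending with `a` is
nonempty and has a `<KB`-least element `π a`;  the resulting map `π` is a ranking
of `r`: if `r b a` then `π b <KB π a`. -/
theorem kleeneBrouwer_least_descending_list_ranking {X : Type*} [LinearOrder X]
    (hX : WellFounded ((· < ·) : X → X → Prop))
    (r : X → X → Prop) (hr : WellFounded r) :
    (∀ a : X, ∃ l : List X, IsDescending r l ∧ l.getLast? = some a) ∧
    ∃ π : X → List X,
      (∀ a : X, IsDescending r (π a) ∧ (π a).getLast? = some a ∧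
        ∀ l : List X, IsDescending r l → l.getLast? = some a →
          π a = l ∨ KBLt (π a) l) ∧
      ∀ a b : X, r b a → KBLt (π b) (π a) := by
  constructor
  · intro a
    exact ⟨[a], List.isChain_singleton _, rfl⟩
  · set S : X → Set X := fun a => {x | Relation.ReflTransGen r a x} with hS
    have hSne : ∀ a, (S a).Nonempty := fun a => ⟨a, Relation.ReflTransGen.refl⟩
    set π : X → List X := fun a =>
      hX.min (S a) (hSne a) :: gAux r hX hr a (hX.min (S a) (hSne a)) with hπ
    have hπspec : ∀ a : X, IsDescending r (π a) ∧ (π a).getLast? = some a := by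
      intro a
      exact gAux_spec r hX hr a _ (hX.min_mem (S a) (hSne a))
    have hπleast : ∀ a : X, ∀ l : List X, IsDescending r l → l.getLast? = some a →
        π a = l ∨ KBLt (π a) l := by
      intro a l hd hl
      cases l with
      | nil => simp at hl
      | cons h t =>
        have hreach : Relation.ReflTransGen r a h := reach_head r t h hd hl
        have hmle : hX.min (S a) (hSne a) ≤ h := not_lt.mp (hX.not_lt_min (S a) (x := h) hreach)
        rcases lt_or_eq_of_le hmle with hlt | heq
        · exact Or.inr (kbLt_head hlt)
        · rw [hπ]
          simp only
          rw [heq]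
          cases t with
          | nil =>
            have : h = a := by simpa using hl
            subst this
            rw [gAux_at_a]
            exact Or.inl rfl
          | cons h' t' =>
            have hd' := List.isChain_cons_cons.mp hd
            have := gAux_least r hX hr a h h' t' hd'.1 hd'.2 (by simpa using hl)
            rcases this with he | hk
            · exact Or.inl (by rw [he])
            · exact Or.inr (kbLt_cons h hk)
    refine ⟨π, fun a => ⟨(hπspec a).1, (hπspec a).2, hπleast a⟩, ?_⟩
    intro a b hba
    have hne : a ≠ b := fun e => (hr.transGen).asymmetric _ _
      (Relation.TransGen.single (e ▸ hba)) (Relation.TransGen.single (e ▸ hba))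
    have hπne : π b ≠ π a := by
      intro e
      have h1 := (hπspec a).2
      have h2 := (hπspec b).2
      rw [e, h1] at h2
      exact hne (by simpa using h2)
    -- π a ++ [b] is descending and ends at b
    have hext : IsDescending r (π a ++ [b]) := by
      refine List.IsChain.append (hπspec a).1 (List.isChain_singleton _) ?_
      intro x hx y hy
      have hx' : x = a := by
        rw [(hπspec a).2] at hx
        exact (by simpa using hx : a = x).symm
      have hy' : y = b := (by simpa using hy : b = y).symm
      rw [hx', hy']
      exact hba
    have hextl : (π a ++ [b]).getLast? = some b := List.getLast?_concat
    have := hπleast b (π a ++ [b]) hext hextl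
    rcases this with he | hk
    · -- π b = π a ++ [b]
      rw [he]
      exact kbLt_concat _ _
    · exact kbLt_of_kbLt_concat hk hπne
end

section
/- Let X be a type with the discrete topology and give ℕ → X the product topology, and let A ⊆ (ℕ → X). Then A is clopen if and only if the one-step-extension relation on undecided positions is well-founded: the relation on List X given by 't is related below s iff t = s ++ [x] for some x ∈ X and both s and t are undecided for A' is a well-founded relation. That is, a game is clopen exactly when its game tree of undecided positions is well-founded. -/
/-- A sequence `f : ℕ → X` extends a finite position `s = [a₀, …, a_{n−1}]`
if `f i = aᵢ` for all `i < n`. -/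
def ExtendsPos {X : Type*} (f : ℕ → X) (s : List X) : Prop :=
  ∀ (i : ℕ) (h : i < s.length), f i = s.get ⟨i, h⟩

/-- A position `s` is undecided for `A` if some extension of `s` lies in `A`
and some extension of `s` lies outside `A`. -/
def Undecided {X : Type*} (A : Set (ℕ → X)) (s : List X) : Prop :=
  (∃ f : ℕ → X, ExtendsPos f s ∧ f ∈ A) ∧ (∃ f : ℕ → X, ExtendsPos f s ∧ f ∉ A)


/-- Openness in the product of discrete spaces via cylinders. -/
lemma isOpen_iff_cyl {X : Type*} [TopologicalSpace X] [DiscreteTopology X] (A : Set (ℕ → X)) :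
    IsOpen A ↔ ∀ f ∈ A, ∃ n : ℕ, ∀ g : ℕ → X, (∀ i < n, g i = f i) → g ∈ A := by
  constructor
  · intro hA f hf
    obtain ⟨I, u, hu, hsub⟩ := isOpen_pi_iff.mp hA f hf
    rcases I.eq_empty_or_nonempty with h | h
    · exact ⟨0, fun g _ => hsub (by simp [h, Set.pi])⟩
    · refine ⟨(I.max' h) + 1, fun g hg => hsub ?_⟩
      intro i hi
      rw [hg i (Nat.lt_succ_of_le (I.le_max' i hi))]
      exact (hu i hi).2
  · intro h
    rw [isOpen_iff_mem_nhds]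
    intro f hf
    obtain ⟨n, hn⟩ := h f hf
    rw [mem_nhds_iff]
    refine ⟨{g | ∀ i < n, g i = f i}, fun g hg => hn g hg, ?_, fun i _ => rfl⟩
    have : {g : ℕ → X | ∀ i < n, g i = f i}
        = Set.pi (↑(Finset.range n)) (fun i => {f i}) := by
      ext g; simp [Set.mem_pi]
    rw [this]
    exact isOpen_set_pi (Finset.range n).finite_toSet (fun a _ => isOpen_discrete _)

lemma exists_descending_of_not_wf {α : Type*} {r : α → α → Prop} (h : ¬ WellFounded r) :
    ∃ f : ℕ → α, ∀ n, r (f (n + 1)) (f n) := by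
  have ha : ∃ a, ¬Acc r a := by
    by_contra h'; push_neg at h'; exact h ⟨h'⟩
  obtain ⟨a, ha⟩ := ha
  have H : ∀ x : {a // ¬Acc r a}, ∃ y : {a // ¬Acc r a}, r y.1 x.1 := by
    rintro ⟨x, hx⟩
    obtain ⟨b, hb1, hb2⟩ := exists_not_acc_lt_of_not_acc hx
    exact ⟨⟨b, hb1⟩, hb2⟩
  choose g hg using H
  refine ⟨fun n => (g^[n] ⟨a, ha⟩).1, fun n => ?_⟩
  simp only [Function.iterate_succ', Function.comp_apply]
  exact hg _

lemma no_descending_of_wf {α : Type*} {r : α → α → Prop} (hwf : WellFounded r) (f : ℕ → α)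
    (h : ∀ n, r (f (n + 1)) (f n)) : False := by
  have key : ∀ a, Acc r a → ∀ n, f n ≠ a := by
    intro a ha
    induction ha with
    | intro a _ ih =>
      intro n hn
      exact ih (f (n + 1)) (hn ▸ h n) (n + 1) rfl
  exact key (f 0) (hwf.apply _) 0 rfl

/-- For `X` discrete and `ℕ → X` with the product topology, a set
`A ⊆ (ℕ → X)` is clopen iff the one-step-extension relation on positions
undecided for `A` is well-founded: a game is clopen exactly when its game
tree of undecided positions is well-founded. -/
theorem isClopen_iff_undecided_tree_wellFounded {X : Type*} [TopologicalSpace X]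
    [DiscreteTopology X] (A : Set (ℕ → X)) :
    IsClopen A ↔ WellFounded (fun t s : List X =>
      (∃ x : X, t = s ++ [x]) ∧ Undecided A s ∧ Undecided A t) := by
  set r := fun t s : List X =>
      (∃ x : X, t = s ++ [x]) ∧ Undecided A s ∧ Undecided A t with hr
  constructor
  · intro hA
    by_contra h
    obtain ⟨s, hstep⟩ := exists_descending_of_not_wf h
    have hund : ∀ n, Undecided A (s n) := fun n => (hstep n).2.1
    have hlen : ∀ n, (s n).length = (s 0).length + n := by
      intro n
      induction n with
      | zero => rfl
      | succ n ih =>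
        obtain ⟨x, hx⟩ := (hstep n).1
        rw [hx, List.length_append, ih]
        simp [Nat.add_assoc]
    have hpre : ∀ m n, m ≤ n → s m <+: s n := by
      intro m n hmn
      induction n with
      | zero => simp [Nat.le_zero.mp hmn]
      | succ n ih =>
        rcases eq_or_lt_of_le hmn with h' | h'
        · simp [h']
        · obtain ⟨x, hx⟩ := (hstep n).1
          exact (ih (Nat.lt_succ_iff.mp h')).trans (hx ▸ List.prefix_append _ _)
    obtain ⟨g0, -, -⟩ := (hund 0).1
    have hXne : Nonempty X := ⟨g0 0⟩
    set F : ℕ → X := fun i => (s (i + 1)).getD i (Classical.arbitrary X) with hF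
    have hFget : ∀ n (i : ℕ) (hi : i < (s n).length), F i = (s n).get ⟨i, hi⟩ := by
      intro n i hi
      have hi' : i < (s (i + 1)).length := by
        rw [hlen]; omega
      have h1 : F i = (s (i + 1)).get ⟨i, hi'⟩ := by
        simp [hF, List.getD, List.getElem?_eq_getElem hi']
      rcases le_total n (i + 1) with h' | h'
      · have := (hpre n (i + 1) h').getElem hi
        simp [h1, List.get_eq_getElem, this]
      · have := (hpre (i + 1) n h').getElem hi'
        simp [h1, List.get_eq_getElem, this]
    by_cases hFA : F ∈ A
    · obtain ⟨n, hn⟩ := (isOpen_iff_cyl A).mp hA.2 F hFA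
      obtain ⟨g, hgext, hgA⟩ := (hund n).2
      refine hgA (hn g ?_)
      intro i hi
      have hi' : i < (s n).length := by rw [hlen]; omega
      rw [hgext i hi', hFget n i hi']
    · obtain ⟨n, hn⟩ := (isOpen_iff_cyl Aᶜ).mp hA.1.isOpen_compl F hFA
      obtain ⟨g, hgext, hgA⟩ := (hund n).1
      refine (hn g ?_ : g ∈ Aᶜ) hgA
      intro i hi
      have hi' : i < (s n).length := by rw [hlen]; omega
      rw [hgext i hi', hFget n i hi']
  · intro hwf
    have key : ∀ (B : Set (ℕ → X)), (∀ s, Undecided B s ↔ Undecided A s) →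
        IsOpen B := by
      intro B hBA
      rw [isOpen_iff_cyl]
      intro f hf
      by_contra h
      push_neg at h
      have hund : ∀ n, Undecided B ((List.range n).map f) := by
        intro n
        obtain ⟨g, hg, hgB⟩ := h n
        constructor
        · exact ⟨f, fun i hi => by simp at hi ⊢, hf⟩
        · refine ⟨g, fun i hi => ?_, hgB⟩
          simp only [List.length_map, List.length_range] at hi
          simpa using hg i hi
      have hchain : ∀ n, r ((List.range (n+1)).map f) ((List.range n).map f) := by
        intro n
        exact ⟨⟨f n, by simp [List.range_succ]⟩, (hBA _).mp (hund n), (hBA _).mp (hund (n+1))⟩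
      exact no_descending_of_wf hwf (fun n => (List.range n).map f) hchain
    have hAopen : IsOpen A := key A (fun s => Iff.rfl)
    have hAc : IsOpen Aᶜ := by
      refine key Aᶜ (fun s => ?_)
      unfold Undecided
      simp only [Set.mem_compl_iff, not_not]
      tauto
    exact ⟨isOpen_compl_iff.mp hAc, hAopen⟩
end

section
/- Let X be a type with the discrete topology, give ℕ → X the product topology, and let A ⊆ (ℕ → X) be open. If τ : List X → X is a winning strategy for player I (the open player) in the game with payoff A, then the tree of positions consistent with τ that are not yet won is well-founded: the relation on List X given by 't is related below s iff t = s ++ [x] for some x ∈ X, both s and t are consistent with τ, and both s and t have some extension lying outside A' is a well-founded relation. -/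
/-- A position `s = [a₀, …, a_{n−1}]` is consistent with a strategy
`τ : List X → X` for player I if `a_{2k} = τ [a₀, …, a_{2k−1}]` whenever
`2k < n`. -/
def ConsistentWithI {X : Type*} (τ : List X → X) (s : List X) : Prop :=
  ∀ (k : ℕ) (h : 2 * k < s.length), s.get ⟨2 * k, h⟩ = τ (s.take (2 * k))

/-- If `A` is open and `τ` is a winning strategy for player I (the open player)
in the game with payoff `A`, then the tree of positions consistent with `τ`
that are not yet won for player I is well-founded. -/
theorem winning_open_strategy_tree_wellFounded {X : Type*} [TopologicalSpace X]
    [DiscreteTopology X] (A : Set (ℕ → X)) (hA : IsOpen A)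
    (τ : List X → X)
    (hτ : ∀ f : ℕ → X, (∀ k : ℕ, f (2 * k) = τ ((List.range (2 * k)).map f)) → f ∈ A) :
    WellFounded (fun t s : List X =>
      (∃ x : X, t = s ++ [x]) ∧ ConsistentWithI τ s ∧ ConsistentWithI τ t ∧
        (∃ f : ℕ → X, ExtendsPos f s ∧ f ∉ A) ∧
        (∃ f : ℕ → X, ExtendsPos f t ∧ f ∉ A)) := by
  set r : List X → List X → Prop := fun t s =>
      (∃ x : X, t = s ++ [x]) ∧ ConsistentWithI τ s ∧ ConsistentWithI τ t ∧
        (∃ f : ℕ → X, ExtendsPos f s ∧ f ∉ A) ∧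
        (∃ f : ℕ → X, ExtendsPos f t ∧ f ∉ A) with hrdef
  by_contra hwf
  obtain ⟨a, ha⟩ : ∃ a, ¬Acc r a := by
    by_contra h'; push_neg at h'; exact hwf ⟨h'⟩
  choose next hnext hrel using
    fun b : {b : List X // ¬ Acc r b} => exists_not_acc_lt_of_not_acc b.2
  set F : ℕ → {b : List X // ¬ Acc r b} :=
    fun n => Nat.rec ⟨a, ha⟩ (fun _ p => ⟨next p, hnext p⟩) n with hF
  set s : ℕ → List X := fun n => (F n).1 with hs
  have hr : ∀ n, r (s (n+1)) (s n) := fun n => hrel (F n)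
  simp only [hrdef] at hr
  have hlen : ∀ n, (s n).length = (s 0).length + n := by
    intro n
    induction n with
    | zero => rfl
    | succ n ih =>
      obtain ⟨x, hx⟩ := (hr n).1
      rw [hx, List.length_append, ih]
      simp [Nat.add_assoc]
  have hpre : ∀ m n, m ≤ n → s m <+: s n := by
    intro m n hmn
    induction hmn with
    | refl => exact List.prefix_refl _
    | step h' ih =>
      obtain ⟨x, hx⟩ := (hr _).1
      exact ih.trans ⟨[x], hx.symm⟩
  have hlt : ∀ i : ℕ, i < (s (i+1)).length := by
    intro i; have := hlen (i+1); omega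
  set f : ℕ → X := fun i => (s (i+1)).get ⟨i, hlt i⟩ with hf
  have hext : ∀ n, ExtendsPos f (s n) := by
    intro n i hi
    rcases le_total n (i+1) with h' | h'
    · have hp := hpre n (i+1) h'
      simp only [hf, List.get_eq_getElem]
      exact (hp.getElem hi).symm
    · have hp := hpre (i+1) n h'
      simp only [hf, List.get_eq_getElem]
      exact hp.getElem (hlt i)
  have haccord : ∀ k : ℕ, f (2 * k) = τ ((List.range (2 * k)).map f) := by
    intro k
    have h2k : 2 * k < (s (2*k+1)).length := by have := hlen (2*k+1); omega
    have hcons := (hr (2*k)).2.2.1 k h2k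
    have htake : (List.range (2 * k)).map f = (s (2*k+1)).take (2 * k) := by
      apply List.ext_getElem
      · simp; omega
      · intro i h1 h2
        simp only [List.getElem_map, List.getElem_range, List.getElem_take]
        have h1' : i < 2 * k := by simpa using h1
        have hi : i < (s (2*k+1)).length := by have := hlen (2*k+1); omega
        have := hext (2*k+1) i hi
        simpa using this
    have : f (2 * k) = (s (2*k+1)).get ⟨2*k, h2k⟩ := hext (2*k+1) (2*k) h2k
    rw [this, hcons, htake]
  have hfA : f ∈ A := hτ f haccord
  obtain ⟨I, u, hu, hsub⟩ := isOpen_pi_iff.1 hA f hfA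
  set m : ℕ := I.sup id + 1 with hm
  obtain ⟨g, hg, hgA⟩ := (hr m).2.2.2.1
  apply hgA
  apply hsub
  intro i hi
  have him : i < (s m).length := by
    have h1 := hlen m
    have h2 : i ≤ I.sup id := Finset.le_sup (f := id) hi
    omega
  have : g i = f i := by rw [hg i him, hext m i him]
  rw [this]
  exact (hu i hi).2
end

section
/- Let P be a preorder that is countably strategically closed, i.e., player II has a winning strategy in the strategic closure game on P. Then for every countable family D : ℕ → Set P of dense open subsets of P and every p ∈ P, there exists q ≤ p with q ∈ D n for all n ∈ ℕ; that is, the intersection of countably many dense open subsets of P is dense. -/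
noncomputable def scStep {P : Type*} [Preorder P] (σ : List P → P) (c : ℕ → P → P) (p : P) :
    ℕ → List P → P
  | 0, _ => p
  | m + 1, l => if (m + 1) % 2 = 1 then σ l else c ((m + 1) / 2 - 1) (l.getLastD p)

noncomputable def scList {P : Type*} [Preorder P] (σ : List P → P) (c : ℕ → P → P) (p : P) :
    ℕ → List P
  | 0 => []
  | n + 1 => scList σ c p n ++ [scStep σ c p n (scList σ c p n)]

noncomputable def scSeq {P : Type*} [Preorder P] (σ : List P → P) (c : ℕ → P → P) (p : P)
    (n : ℕ) : P := scStep σ c p n (scList σ c p n)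

/-- If a preorder `P` is countably strategically closed — player II has a winning
strategy `σ` in the strategic closure game, i.e. `σ` answers any legal position
`[p₀, …, p_{2k}]` with a condition below `p_{2k}`, and every infinite descending
sequence of conditions according with `σ` has a lower bound in `P` — then for any
countable family of dense open subsets of `P` and any `p ∈ P` there is `q ≤ p`
lying in all of them: the intersection of countably many dense open sets is dense. -/
theorem countably_strategically_closed_dense_open_intersection {P : Type*} [Preorder P]
    (h : ∃ σ : List P → P,
      (∀ l : List P, List.Chain' (fun a b => b ≤ a) l → Odd l.length →
        ∀ x : P, l.getLast? = some x → σ l ≤ x) ∧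
      (∀ p : ℕ → P, (∀ n : ℕ, p (n + 1) ≤ p n) →
        (∀ k : ℕ, p (2 * k + 1) = σ ((List.range (2 * k + 1)).map p)) →
        ∃ q : P, ∀ n : ℕ, q ≤ p n))
    (D : ℕ → Set P)
    (hDdense : ∀ n : ℕ, ∀ p : P, ∃ q ≤ p, q ∈ D n)
    (hDopen : ∀ n : ℕ, ∀ p ∈ D n, ∀ q : P, q ≤ p → q ∈ D n)
    (p : P) :
    ∃ q ≤ p, ∀ n : ℕ, q ∈ D n := by
  classical
  obtain ⟨σ, h1, h2⟩ := h
  choose c hc1 hc2 using hDdense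
  set s : ℕ → P := scSeq σ c p with hs
  have hg : ∀ n, scList σ c p (n + 1) = scList σ c p n ++ [s n] := fun n => rfl
  have hlen : ∀ n, (scList σ c p n).length = n := by
    intro n; induction n with
    | zero => rfl
    | succ n ih => rw [hg, List.length_append, ih]; rfl
  have hmap : ∀ n, scList σ c p n = (List.range n).map s := by
    intro n; induction n with
    | zero => rfl
    | succ n ih => rw [hg, List.range_succ, List.map_append, ih]; rfl
  have hlast : ∀ n, (scList σ c p (n + 1)).getLast? = some (s n) := by
    intro n; rw [hg]; exact List.getLast?_concat
  have hlastD : ∀ n, (scList σ c p (n + 1)).getLastD p = s n := by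
    intro n; rw [List.getLastD_eq_getLast?, hlast]; rfl
  have hs0 : s 0 = p := rfl
  have hodd : ∀ m, (m + 1) % 2 = 1 → s (m + 1) = σ (scList σ c p (m + 1)) := by
    intro m hm
    show scStep σ c p (m + 1) (scList σ c p (m + 1)) = _
    rw [scStep, if_pos hm]
  have heven : ∀ m, (m + 1) % 2 ≠ 1 →
      s (m + 1) = c ((m + 1) / 2 - 1) (s m) := by
    intro m hm
    show scStep σ c p (m + 1) (scList σ c p (m + 1)) = _
    rw [scStep, if_neg hm, hlastD]
  have desc : ∀ m, List.Chain' (fun a b => b ≤ a) (scList σ c p (m + 1)) →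
      s (m + 1) ≤ s m := by
    intro m hch
    by_cases hm : (m + 1) % 2 = 1
    · rw [hodd m hm]
      exact h1 _ hch (by rw [hlen]; exact Nat.odd_iff.mpr hm) (s m) (hlast m)
    · rw [heven m hm]; exact hc1 _ _
  have main : ∀ n, List.Chain' (fun a b => b ≤ a) (scList σ c p n) := by
    intro n; induction n with
    | zero => exact List.isChain_nil
    | succ n ih =>
      rw [hg]
      apply List.IsChain.append ih (List.isChain_singleton _)
      intro x hx y hy
      cases n with
      | zero => simp [scList] at hx
      | succ m =>
        rw [hlast m] at hx
        simp only [List.head?_cons, Option.mem_def, Option.some.injEq] at hx hy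
        rw [← hx, ← hy]
        exact desc m ih
  have hdesc : ∀ n, s (n + 1) ≤ s n := fun n => desc n (main (n + 1))
  have hacc : ∀ k, s (2 * k + 1) = σ ((List.range (2 * k + 1)).map s) := by
    intro k
    rw [← hmap]
    exact hodd (2 * k) (by omega)
  obtain ⟨q, hq⟩ := h2 s hdesc hacc
  refine ⟨q, hs0 ▸ hq 0, fun n => ?_⟩
  have h22 : s (2 * n + 2) = c n (s (2 * n + 1)) := by
    have := heven (2 * n + 1) (by omega)
    rwa [show (2 * n + 1 + 1) / 2 - 1 = n by omega] at this
  exact hDopen n _ (h22 ▸ hc2 n (s (2 * n + 1))) q (hq (2 * n + 2))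
end

section
/- Let X be a nonempty type and A ⊆ (ℕ → X). Suppose the game tree of undecided positions is ranked by a well-order: there are a linearly ordered type Γ with well-founded strict order and a function π from the undecided positions (for A) to Γ such that whenever s and s ++ [x] are both undecided, π(s ++ [x]) < π(s). Then the game with payoff A is determined: either player I has a winning strategy or player II has a winning strategy. -/
namespace DetAux

inductive IW {X : Type*} (A : Set (ℕ → X)) : List X → Prop
  | base (s) : (∀ f, ExtendsPos f s → f ∈ A) → IW A s
  | estep (s x) : Even s.length → IW A (s ++ [x]) → IW A s
  | ostep (s) : Odd s.length → (∀ x, IW A (s ++ [x])) → IW A s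

inductive IIW {X : Type*} (A : Set (ℕ → X)) : List X → Prop
  | base (s) : (∀ f, ExtendsPos f s → f ∉ A) → IIW A s
  | ostep (s x) : Odd s.length → IIW A (s ++ [x]) → IIW A s
  | estep (s) : Even s.length → (∀ x, IIW A (s ++ [x])) → IIW A s

variable {X : Type*} (A : Set (ℕ → X))

theorem extendsPos_of_snoc {f : ℕ → X} {s : List X} {x : X}
    (h : ExtendsPos f (s ++ [x])) : ExtendsPos f s := by
  intro i hi
  have hi' : i < (s ++ [x]).length := by simp; omega
  have := h i hi'
  simpa [List.getElem_append_left hi] using this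

theorem exists_extendsPos [Nonempty X] (s : List X) : ∃ f : ℕ → X, ExtendsPos f s := by
  refine ⟨fun i => if h : i < s.length then s.get ⟨i, h⟩ else Classical.arbitrary X, ?_⟩
  intro i hi
  simp [hi]

theorem IW_exists_mem [Nonempty X] {s : List X} (h : IW A s) :
    ∃ f, ExtendsPos f s ∧ f ∈ A := by
  induction h with
  | base s hs =>
      obtain ⟨f, hf⟩ := exists_extendsPos s
      exact ⟨f, hf, hs f hf⟩
  | estep s x _ _ ih =>
      obtain ⟨f, hf, hfA⟩ := ih
      exact ⟨f, extendsPos_of_snoc hf, hfA⟩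
  | ostep s _ _ ih =>
      obtain ⟨f, hf, hfA⟩ := ih (Classical.arbitrary X)
      exact ⟨f, extendsPos_of_snoc hf, hfA⟩

theorem IIW_exists_not_mem [Nonempty X] {s : List X} (h : IIW A s) :
    ∃ f, ExtendsPos f s ∧ f ∉ A := by
  induction h with
  | base s hs =>
      obtain ⟨f, hf⟩ := exists_extendsPos s
      exact ⟨f, hf, hs f hf⟩
  | ostep s x _ _ ih =>
      obtain ⟨f, hf, hfA⟩ := ih
      exact ⟨f, extendsPos_of_snoc hf, hfA⟩
  | estep s _ _ ih =>
      obtain ⟨f, hf, hfA⟩ := ih (Classical.arbitrary X)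
      exact ⟨f, extendsPos_of_snoc hf, hfA⟩

theorem IW_even_inv {s : List X} (h : IW A s) (he : Even s.length) :
    (∀ f, ExtendsPos f s → f ∈ A) ∨ ∃ x, IW A (s ++ [x]) := by
  cases h with
  | base _ hs => exact Or.inl hs
  | estep _ x _ h => exact Or.inr ⟨x, h⟩
  | ostep _ ho _ => exact absurd he (Nat.not_even_iff_odd.mpr ho)

theorem IW_odd_inv {s : List X} (h : IW A s) (ho : Odd s.length) :
    (∀ f, ExtendsPos f s → f ∈ A) ∨ ∀ x, IW A (s ++ [x]) := by
  cases h with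
  | base _ hs => exact Or.inl hs
  | estep _ x he _ => exact absurd he (Nat.not_even_iff_odd.mpr ho)
  | ostep _ _ h => exact Or.inr h

theorem IIW_odd_inv {s : List X} (h : IIW A s) (ho : Odd s.length) :
    (∀ f, ExtendsPos f s → f ∉ A) ∨ ∃ x, IIW A (s ++ [x]) := by
  cases h with
  | base _ hs => exact Or.inl hs
  | ostep _ x _ h => exact Or.inr ⟨x, h⟩
  | estep _ he _ => exact absurd he (Nat.not_even_iff_odd.mpr ho)

theorem IIW_even_inv {s : List X} (h : IIW A s) (he : Even s.length) :
    (∀ f, ExtendsPos f s → f ∉ A) ∨ ∀ x, IIW A (s ++ [x]) := by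
  cases h with
  | base _ hs => exact Or.inl hs
  | ostep _ x ho _ => exact absurd he (Nat.not_even_iff_odd.mpr ho)
  | estep _ _ h => exact Or.inr h

end DetAux


open DetAux in
/-- If the tree of undecided positions of the game with payoff `A` is ranked by a
well-order — there are a linearly ordered type `Γ` with well-founded strict order
and `π` from the undecided positions to `Γ` with `π (s ++ [x]) < π s` whenever
both are undecided — then the game is determined: player I has a winning strategy
(every play `f` with `f (2k) = τ [f 0, …, f (2k−1)]` for all `k` lies in `A`) or
player II has a winning strategy (every play `f` with
`f (2k+1) = σ [f 0, …, f (2k)]` for all `k` lies outside `A`). -/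
theorem determined_of_ranked_undecided_tree {X : Type*} [Nonempty X]
    (A : Set (ℕ → X))
    (h : ∃ (Γ : Type*) (inst : LinearOrder Γ),
      WellFounded inst.lt ∧
      ∃ π : {s : List X // Undecided A s} → Γ,
        ∀ s t : {s : List X // Undecided A s},
          (∃ x : X, (t : List X) = (s : List X) ++ [x]) → inst.lt (π t) (π s)) :
    (∃ τ : List X → X, ∀ f : ℕ → X,
        (∀ k : ℕ, f (2 * k) = τ ((List.range (2 * k)).map f)) → f ∈ A) ∨
    (∃ σ : List X → X, ∀ f : ℕ → X,
        (∀ k : ℕ, f (2 * k + 1) = σ ((List.range (2 * k + 1)).map f)) → f ∉ A) := by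
  classical
  obtain ⟨Γ, inst, wf, π, hπ⟩ := h
  -- decided positions are immediately won
  have hdecided : ∀ s : List X, ¬ Undecided A s → IW A s ∨ IIW A s := by
    intro s hs
    rw [Undecided, not_and_or] at hs
    rcases hs with hs | hs
    · push_neg at hs
      exact Or.inr (IIW.base s hs)
    · push_neg at hs
      exact Or.inl (IW.base s fun f hf => hs f hf)
  -- totality
  have key : ∀ s : {s : List X // Undecided A s}, IW A s.1 ∨ IIW A s.1 := by
    have wf' : WellFounded (fun a b : {s : List X // Undecided A s} => inst.lt (π a) (π b)) :=
      InvImage.wf π wf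
    intro s
    induction s using wf'.induction with
    | _ s ih =>
      obtain ⟨s, hs⟩ := s
      have hchild : ∀ x : X, IW A (s ++ [x]) ∨ IIW A (s ++ [x]) := by
        intro x
        by_cases hu : Undecided A (s ++ [x])
        · exact ih ⟨s ++ [x], hu⟩ (hπ ⟨s, hs⟩ ⟨s ++ [x], hu⟩ ⟨x, rfl⟩)
        · exact hdecided _ hu
      rcases Nat.even_or_odd s.length with he | ho
      · by_cases hx : ∃ x, IW A (s ++ [x])
        · obtain ⟨x, hx⟩ := hx
          exact Or.inl (IW.estep s x he hx)
        · push_neg at hx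
          exact Or.inr (IIW.estep s he fun x => (hchild x).resolve_left (hx x))
      · by_cases hx : ∃ x, IIW A (s ++ [x])
        · obtain ⟨x, hx⟩ := hx
          exact Or.inr (IIW.ostep s x ho hx)
        · push_neg at hx
          exact Or.inl (IW.ostep s ho fun x => (hchild x).resolve_right (hx x))
  have total : IW A ([] : List X) ∨ IIW A ([] : List X) := by
    by_cases hu : Undecided A ([] : List X)
    · exact key ⟨[], hu⟩
    · exact hdecided [] hu
  rcases total with hI | hII
  · -- player I wins
    left
    refine ⟨fun s => if hx : ∃ x, IW A (s ++ [x]) then hx.choose else Classical.arbitrary X, ?_⟩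
    intro f hf
    by_contra hfA
    set s : ℕ → List X := fun n => (List.range n).map f with hsdef
    have hlen : ∀ n, (s n).length = n := by simp [hsdef]
    have hsucc : ∀ n, s (n + 1) = s n ++ [f n] := by
      intro n; simp [hsdef, List.range_succ]
    have hext : ∀ n, ExtendsPos f (s n) := by
      intro n i hi
      simp [hsdef]
    have hIW : ∀ n, IW A (s n) := by
      intro n
      induction n with
      | zero => simpa [hsdef] using hI
      | succ n ih =>
        rcases Nat.even_or_odd n with he | ho
        · obtain ⟨k, hk⟩ := he
          have hn : n = 2 * k := by omega
          subst hn
          rcases IW_even_inv A ih (by rw [hlen]; exact ⟨k, hk⟩) with hall | hx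
          · exact absurd (hall f (hext _)) hfA
          · have hτ : f (2 * k) = hx.choose := by
              rw [hf k]
              show (if hx' : ∃ x, IW A (s (2 * k) ++ [x]) then hx'.choose
                else Classical.arbitrary X) = hx.choose
              exact dif_pos hx
            rw [hsucc, hτ]
            exact hx.choose_spec
        · rcases IW_odd_inv A ih (by rw [hlen]; exact ho) with hall | hx
          · exact absurd (hall f (hext n)) hfA
          · rw [hsucc]; exact hx (f n)
    have hund : ∀ n, Undecided A (s n) := fun n =>
      ⟨IW_exists_mem A (hIW n), ⟨f, hext n, hfA⟩⟩
    have hdesc : ∀ n, inst.lt (π ⟨s (n + 1), hund (n + 1)⟩) (π ⟨s n, hund n⟩) := by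
      intro n
      exact hπ _ _ ⟨f n, by simp [hsucc]⟩
    obtain ⟨c, ⟨n, rfl⟩, hmin⟩ :=
      wf.has_min (Set.range fun n => π ⟨s n, hund n⟩) ⟨_, 0, rfl⟩
    exact hmin _ ⟨n + 1, rfl⟩ (hdesc n)
  · -- player II wins
    right
    refine ⟨fun s => if hx : ∃ x, IIW A (s ++ [x]) then hx.choose else Classical.arbitrary X, ?_⟩
    intro f hf hfA
    set s : ℕ → List X := fun n => (List.range n).map f with hsdef
    have hlen : ∀ n, (s n).length = n := by simp [hsdef]
    have hsucc : ∀ n, s (n + 1) = s n ++ [f n] := by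
      intro n; simp [hsdef, List.range_succ]
    have hext : ∀ n, ExtendsPos f (s n) := by
      intro n i hi
      simp [hsdef]
    have hIIW : ∀ n, IIW A (s n) := by
      intro n
      induction n with
      | zero => simpa [hsdef] using hII
      | succ n ih =>
        rcases Nat.even_or_odd n with he | ho
        · rcases IIW_even_inv A ih (by rw [hlen]; exact he) with hall | hx
          · exact absurd hfA (hall f (hext n))
          · rw [hsucc]; exact hx (f n)
        · obtain ⟨k, hk⟩ := ho
          subst hk
          rcases IIW_odd_inv A ih (by rw [hlen]; exact ⟨k, rfl⟩) with hall | hx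
          · exact absurd hfA (hall f (hext _))
          · have hτ : f (2 * k + 1) = hx.choose := by
              rw [hf k]
              show (if hx' : ∃ x, IIW A (s (2 * k + 1) ++ [x]) then hx'.choose
                else Classical.arbitrary X) = hx.choose
              exact dif_pos hx
            rw [hsucc, hτ]
            exact hx.choose_spec
    have hund : ∀ n, Undecided A (s n) := fun n =>
      ⟨⟨f, hext n, hfA⟩, IIW_exists_not_mem A (hIIW n)⟩
    have hdesc : ∀ n, inst.lt (π ⟨s (n + 1), hund (n + 1)⟩) (π ⟨s n, hund n⟩) := by
      intro n
      exact hπ _ _ ⟨f n, by simp [hsucc]⟩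
    obtain ⟨c, ⟨n, rfl⟩, hmin⟩ :=
      wf.has_min (Set.range fun n => π ⟨s n, hund n⟩) ⟨_, 0, rfl⟩
    exact hmin _ ⟨n + 1, rfl⟩ (hdesc n)
end
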